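/- Let (Ω, μ) be a finite measure space with normalized expectation E, and U ≥ 0 measurable with E[U] = 1 and E[|U² log U|] < ∞. Then the selective change of selective entropy ∂_NS S_NS := cov(−U log U, U) = E[−(U−1)·U·log U] satisfies ∂_NS S_NS ≤ 0, with equality if and only if U = 1 almost everywhere. -/

import Mathlib

open MeasureTheory Real Set

lemma wsl_key (x : ℝ) (hx : 0 ≤ x) : 0 ≤ (x - 1) * x * Real.log x := by
  rcases eq_or_lt_of_le hx with h | h
  · simp [← h]
  rcases le_or_gt 1 x with h1 | h1
  · have := Real.log_nonneg h1
    nlinarith [mul_nonneg (mul_nonneg (show (0:ℝ) ≤ x - 1 by linarith) hx) this]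
  · have := Real.log_nonpos hx h1.le
    nlinarith [mul_nonneg hx (mul_nonneg (show (0:ℝ) ≤ 1 - x by linarith) (neg_nonneg.mpr this))]

lemma wsl_key_eq (x : ℝ) (hx : 0 ≤ x) (h : (x - 1) * x * Real.log x = 0) :
    x = 0 ∨ x = 1 := by
  by_contra hc
  push_neg at hc
  obtain ⟨h0, h1⟩ := hc
  have hx' : 0 < x := lt_of_le_of_ne hx (Ne.symm h0)
  rcases lt_or_gt_of_ne h1 with hl | hg
  · have := Real.log_neg hx' hl
    nlinarith [mul_pos (mul_pos (show (0:ℝ) < 1 - x by linarith) hx') (neg_pos.mpr this)]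
  · have := Real.log_pos hg
    nlinarith [mul_pos (mul_pos (show (0:ℝ) < x - 1 by linarith) hx') this]

/-- Weak Second Law of Natural Selection: the selective change of selective entropy
`∂_NS S_NS = cov(−U log U, U) = E[−(U−1)·U·log U]` is non-positive, with equality
iff `U = 1` almost everywhere (purely environmental case). -/
theorem weak_second_law
    {Ω : Type*} [MeasurableSpace Ω] (μ : Measure Ω) [IsFiniteMeasure μ]
    (hN : 0 < (μ univ).toReal)
    (U : Ω → ℝ) (hUm : Measurable U) (hU0 : ∀ x, 0 ≤ U x)
    (hU1 : (∫ x, U x ∂μ) / (μ univ).toReal = 1)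
    (hent1 : Integrable (fun x => U x * Real.log (U x)) μ)
    (hent2 : Integrable (fun x => (U x) ^ 2 * Real.log (U x)) μ) :
    let N := (μ univ).toReal
    let c := (∫ x, -((U x - 1) * U x * Real.log (U x)) ∂μ) / N
    c ≤ 0 ∧ (c = 0 ↔ ∀ᵐ x ∂μ, U x = 1) := by
  intro N c
  have hNne : N ≠ 0 := ne_of_gt hN
  -- U is integrable (else ∫ U = 0 contradicts hU1)
  have hUint : Integrable U μ := by
    by_contra h
    rw [integral_undef h, zero_div] at hU1
    norm_num at hU1
  -- h := (U-1)·U·log U is integrable, nonneg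
  have hhint : Integrable (fun x => (U x - 1) * U x * Real.log (U x)) μ := by
    apply (hent2.sub hent1).congr
    filter_upwards with x
    simp only [Pi.sub_apply]
    ring
  have hhnn : ∀ x, 0 ≤ (U x - 1) * U x * Real.log (U x) := fun x => wsl_key (U x) (hU0 x)
  have hneg : (∫ x, -((U x - 1) * U x * Real.log (U x)) ∂μ)
      = -(∫ x, (U x - 1) * U x * Real.log (U x) ∂μ) := integral_neg _
  have hInn : 0 ≤ ∫ x, (U x - 1) * U x * Real.log (U x) ∂μ :=
    integral_nonneg hhnn
  constructor
  · exact div_nonpos_of_nonpos_of_nonneg (by rw [hneg]; linarith) hN.le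
  · constructor
    · intro hc
      have hI0 : (∫ x, (U x - 1) * U x * Real.log (U x) ∂μ) = 0 := by
        have := (div_eq_zero_iff.mp hc).resolve_right hNne
        rw [hneg] at this; linarith
      have hae : (fun x => (U x - 1) * U x * Real.log (U x)) =ᵐ[μ] 0 :=
        (integral_eq_zero_iff_of_nonneg hhnn hhint).mp hI0
      -- so U ∈ {0,1} a.e., hence U ≤ 1 a.e., i.e. 1 - U ≥ 0 a.e.
      have hvnn : 0 ≤ᵐ[μ] fun x => 1 - U x := by
        filter_upwards [hae] with x hx
        rcases wsl_key_eq (U x) (hU0 x) hx with h | h <;> simp [h]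
      have hvint : Integrable (fun x => 1 - U x) μ := (integrable_const 1).sub hUint
      have hUN : (∫ x, U x ∂μ) = N := by
        field_simp at hU1
        linarith [hU1]
      have hv0 : (∫ x, (1 - U x) ∂μ) = 0 := by
        rw [integral_sub (integrable_const 1) hUint, integral_const, hUN]
        simp [N, Measure.real]
      have := (integral_eq_zero_iff_of_nonneg_ae hvnn hvint).mp hv0
      filter_upwards [this] with x hx
      have : (1 : ℝ) - U x = 0 := hx
      linarith
    · intro hae
      have : (fun x => -((U x - 1) * U x * Real.log (U x))) =ᵐ[μ] 0 := by
        filter_upwards [hae] with x hx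
        simp [hx]
      simp only [c, integral_congr_ae this]
      simp
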